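/- Let n ≥ 1, γ ∈ ℝ, and let I ⊆ ℝ be an open interval. Let ρ, Φ : I × ℝⁿ → ℝ be smooth with ρ(t,x) > 0 for all (t,x), satisfying ∂_t ρ + ∇·(ρ^γ ∇Φ) = 0 and ∂_t Φ + (γ/2)·ρ^{γ−1}·‖∇Φ‖² = 0 on I × ℝⁿ, and set v(t,x) = ρ(t,x)^{γ−1}·∇Φ(t,x). Let X : I → ℝⁿ be twice differentiable with dX/dt (t) = v(t, X(t)) for all t ∈ I. Then for every t ∈ I: d²X/dt²(t) + ((γ−1)/2)·(∇‖v‖²)(t, X(t)) + (γ−1)·(∇·v)(t, X(t))·(dX/dt)(t) − ((γ−2)(γ−1)/2)·(∇log ρ)(t, X(t))·‖(dX/dt)(t)‖² = 0. -/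

import Mathlib

open MeasureTheory Filter Set
open scoped InnerProductSpace Topology

/-- Partial derivative `∂ⱼ f x` on Euclidean space. -/
noncomputable def pder (n : ℕ) (j : Fin n) (f : EuclideanSpace ℝ (Fin n) → ℝ)
    (x : EuclideanSpace ℝ (Fin n)) : ℝ :=
  fderiv ℝ f x (EuclideanSpace.single j 1)

/-- Divergence `∇·v` of a vector field on Euclidean space. -/
noncomputable def divg (n : ℕ) (v : EuclideanSpace ℝ (Fin n) → EuclideanSpace ℝ (Fin n))
    (x : EuclideanSpace ℝ (Fin n)) : ℝ :=
  ∑ j, pder n j (fun y => v y j) x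

/-- Laplacian `Δf = ∑ⱼ ∂ⱼ∂ⱼ f`. -/
noncomputable def lapl (n : ℕ) (f : EuclideanSpace ℝ (Fin n) → ℝ)
    (x : EuclideanSpace ℝ (Fin n)) : ℝ :=
  ∑ j, pder n j (fun y => pder n j f y) x

/-- Entry `(i,j)` of the Hessian matrix of `f`. -/
noncomputable def hessij (n : ℕ) (f : EuclideanSpace ℝ (Fin n) → ℝ)
    (x : EuclideanSpace ℝ (Fin n)) (i j : Fin n) : ℝ :=
  pder n i (fun y => pder n j f y) x

/-- Hessian quadratic form `Hess f (u,u) = ∑ᵢⱼ (∂ᵢ∂ⱼf) uᵢ uⱼ`. -/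
noncomputable def hessQF (n : ℕ) (f : EuclideanSpace ℝ (Fin n) → ℝ)
    (x u : EuclideanSpace ℝ (Fin n)) : ℝ :=
  ∑ i, ∑ j, hessij n f x i j * u i * u j

/-- Squared Frobenius norm of the Hessian: `‖Hess f‖² = ∑ᵢⱼ (∂ᵢ∂ⱼf)²`. -/
noncomputable def hessFrob (n : ℕ) (f : EuclideanSpace ℝ (Fin n) → ℝ)
    (x : EuclideanSpace ℝ (Fin n)) : ℝ :=
  ∑ i, ∑ j, (hessij n f x i j)^2

section helpers
variable {n : ℕ}
local notation "EE" => EuclideanSpace ℝ (Fin n)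

lemma grad_comp' (f : EE → ℝ) (x : EE) (i : Fin n) :
    gradient f x i = fderiv ℝ f x (EuclideanSpace.single i 1) := by
  have h : inner ℝ (gradient f x) (EuclideanSpace.single i 1)
      = fderiv ℝ f x (EuclideanSpace.single i 1) := by
    rw [gradient, InnerProductSpace.toDual_symm_apply]
  rw [EuclideanSpace.inner_single_right] at h
  simpa using h

lemma norm_sq_eq' (x : EE) : ‖x‖^2 = ∑ j, x j * x j := by
  rw [EuclideanSpace.norm_eq, Real.sq_sqrt (by positivity)]
  simp [sq]

lemma esum_single (x : EE) : ∑ j, x j • EuclideanSpace.single j (1:ℝ) = x := by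
  ext k
  have : (∑ j, x j • EuclideanSpace.single j (1:ℝ)) k
      = ∑ j, (x j • EuclideanSpace.single j (1:ℝ)) k := by rw [WithLp.ofLp_sum, Finset.sum_apply]
  rw [this]
  simp [EuclideanSpace.single_apply]

lemma slice_t (f : ℝ × EE → ℝ) (p : ℝ × EE) (h : DifferentiableAt ℝ f p) :
    HasDerivAt (fun s => f (s, p.2)) (fderiv ℝ f p (1, 0)) p.1 := by
  have hc : HasDerivAt (fun s : ℝ => (s, p.2)) ((1 : ℝ), (0 : EE)) p.1 :=
    (hasDerivAt_id p.1).prodMk (hasDerivAt_const _ _)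
  simpa [Function.comp_def] using h.hasFDerivAt.comp_hasDerivAt p.1 hc

lemma slice_x (f : ℝ × EE → ℝ) (p : ℝ × EE) (h : DifferentiableAt ℝ f p) :
    HasFDerivAt (fun y => f (p.1, y))
      ((fderiv ℝ f p).comp (ContinuousLinearMap.inr ℝ ℝ EE)) p.2 := by
  simpa [Function.comp_def] using h.hasFDerivAt.comp p.2 (hasFDerivAt_prodMk_right p.1 p.2)

lemma ev2 (Q : ℝ × EE → ℝ) (p : ℝ × EE) (h : DifferentiableAt ℝ (fderiv ℝ Q) p)
    (w : ℝ × EE) :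
    HasFDerivAt (fun q => fderiv ℝ Q q w)
      ((ContinuousLinearMap.apply ℝ ℝ w).comp (fderiv ℝ (fderiv ℝ Q) p)) p :=
  (ContinuousLinearMap.apply ℝ ℝ w).hasFDerivAt.comp p h.hasFDerivAt

end helpers

set_option maxHeartbeats 2000000 in
/-- Lagrangian coordinates of the γ-Wasserstein geodesic flow.
If `(ρ, Φ)` solves the co-geodesic system, `v = ρ^{γ−1}∇Φ`, and `X` is a twice
differentiable trajectory with `X' (t) = v(t, X(t))`, then
`X'' + ((γ−1)/2)∇‖v‖² + (γ−1)(∇·v)X' − ((γ−2)(γ−1)/2)(∇log ρ)‖X'‖² = 0`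
along the trajectory. -/
theorem stmt9 (n : ℕ) (hn : 1 ≤ n) (γ : ℝ)
    (I : Set ℝ) (hIopen : IsOpen I) (hIconn : I.OrdConnected)
    (ρ Φ : ℝ → EuclideanSpace ℝ (Fin n) → ℝ)
    (hρ : ContDiffOn ℝ (⊤ : ℕ∞) (fun p : ℝ × EuclideanSpace ℝ (Fin n) => ρ p.1 p.2)
      (I ×ˢ univ))
    (hΦ : ContDiffOn ℝ (⊤ : ℕ∞) (fun p : ℝ × EuclideanSpace ℝ (Fin n) => Φ p.1 p.2)
      (I ×ˢ univ))
    (hρpos : ∀ t ∈ I, ∀ x, 0 < ρ t x)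
    (hcont : ∀ t ∈ I, ∀ x, deriv (fun s => ρ s x) t
      + divg n (fun y => (ρ t y)^γ • gradient (Φ t) y) x = 0)
    (hHJ : ∀ t ∈ I, ∀ x, deriv (fun s => Φ s x) t
      + (γ/2) * (ρ t x)^(γ-1) * ‖gradient (Φ t) x‖^2 = 0)
    (v : ℝ → EuclideanSpace ℝ (Fin n) → EuclideanSpace ℝ (Fin n))
    (hv : ∀ t x, v t x = (ρ t x)^(γ-1) • gradient (Φ t) x)
    (X : ℝ → EuclideanSpace ℝ (Fin n))
    (hX : ∀ t ∈ I, HasDerivAt X (v t (X t)) t)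
    (hX' : ∀ t ∈ I, DifferentiableAt ℝ (deriv X) t) :
    ∀ t ∈ I,
      deriv (deriv X) t
        + ((γ-1)/2) • gradient (fun y => ‖v t y‖^2) (X t)
        + ((γ-1) * divg n (v t) (X t)) • deriv X t
        - (((γ-2)*(γ-1)/2) * ‖deriv X t‖^2) • gradient (fun y => Real.log (ρ t y)) (X t)
      = 0 := by
  intro t ht
  classical
  set Pf : ℝ × EuclideanSpace ℝ (Fin n) → ℝ := fun p => ρ p.1 p.2 with hPfdef
  set Qf : ℝ × EuclideanSpace ℝ (Fin n) → ℝ := fun p => Φ p.1 p.2 with hQfdef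
  have hUopen : IsOpen (I ×ˢ (univ : Set (EuclideanSpace ℝ (Fin n)))) :=
    hIopen.prod isOpen_univ
  have hPat : ∀ s ∈ I, ∀ y, ContDiffAt ℝ (⊤ : ℕ∞) Pf (s, y) := fun s hs y =>
    hρ.contDiffAt (hUopen.mem_nhds ⟨hs, trivial⟩)
  have hQat : ∀ s ∈ I, ∀ y, ContDiffAt ℝ (⊤ : ℕ∞) Qf (s, y) := fun s hs y =>
    hΦ.contDiffAt (hUopen.mem_nhds ⟨hs, trivial⟩)
  have hPd : ∀ s ∈ I, ∀ y, DifferentiableAt ℝ Pf (s, y) := fun s hs y =>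
    (hPat s hs y).differentiableAt (by simp)
  have hQd : ∀ s ∈ I, ∀ y, DifferentiableAt ℝ Qf (s, y) := fun s hs y =>
    (hQat s hs y).differentiableAt (by simp)
  have hQ'd : ∀ s ∈ I, ∀ y, DifferentiableAt ℝ (fderiv ℝ Qf) (s, y) := fun s hs y =>
    ((hQat s hs y).fderiv_right (m := (⊤ : ℕ∞)) (by exact_mod_cast le_top)).differentiableAt
      (by simp)
  -- basis directions
  set eT : ℝ × EuclideanSpace ℝ (Fin n) := ((1:ℝ), (0 : EuclideanSpace ℝ (Fin n))) with heT
  set ee : Fin n → ℝ × EuclideanSpace ℝ (Fin n) :=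
    fun i => ((0:ℝ), EuclideanSpace.single i 1) with hee
  -- first derivatives data at (t, X t)
  set A := fderiv ℝ Pf (t, X t) with hA
  set B := fderiv ℝ Qf (t, X t) with hB
  set B2 := fderiv ℝ (fderiv ℝ Qf) (t, X t) with hB2
  set r := ρ t (X t) with hrdef
  have hr : 0 < r := hρpos t ht (X t)
  set g : Fin n → ℝ := fun i => B (ee i) with hg
  set rr : Fin n → ℝ := fun i => A (ee i) with hrr
  set H : Fin n → Fin n → ℝ := fun i j => B2 (ee i) (ee j) with hH
  set S : ℝ := ∑ j, g j * g j with hS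
  set uu : ℝ := ∑ j, rr j * g j with huu
  set K : ℝ := ∑ j, H j j with hK
  set TT : Fin n → ℝ := fun i => ∑ j, g j * H i j with hTT
  have hsym : ∀ u w, B2 u w = B2 w u := fun u w =>
    (hQat t ht (X t)).isSymmSndFDerivAt (by simp; exact WithTop.coe_le_coe.mpr le_top) u w
  -- gradient formula
  have hgradΦ : ∀ s ∈ I, ∀ y, ∀ i, gradient (Φ s) y i = fderiv ℝ Qf (s, y) (ee i) := by
    intro s hs y i
    rw [grad_comp']
    have hsl := slice_x Qf (s, y) (hQd s hs y)
    have heq : fderiv ℝ (Φ s) y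
        = (fderiv ℝ Qf (s, y)).comp (ContinuousLinearMap.inr ℝ ℝ _) := hsl.fderiv
    rw [heq]
    simp [hee]
  have hvc : ∀ s ∈ I, ∀ y, ∀ i, v s y i = Pf (s, y) ^ (γ-1) * fderiv ℝ Qf (s, y) (ee i) := by
    intro s hs y i
    rw [hv, PiLp.smul_apply, smul_eq_mul, hgradΦ s hs y i]
  -- curve
  have hξ := hX t ht
  have hderivX : deriv X t = v t (X t) := hξ.deriv
  have hcurve : HasDerivAt (fun s => (s, X s)) ((1:ℝ), v t (X t)) t :=
    (hasDerivAt_id t).prodMk hξ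
  have hξi : ∀ i, v t (X t) i = r ^ (γ-1) * g i := fun i => hvc t ht (X t) i
  -- spatial derivative helpers at X t
  have hm : HasFDerivAt (fun y => Pf (t, y))
      (A.comp (ContinuousLinearMap.inr ℝ ℝ _)) (X t) := slice_x Pf (t, X t) (hPd t ht (X t))
  have hq : ∀ w, HasFDerivAt (fun y => fderiv ℝ Qf (t, y) w)
      (((ContinuousLinearMap.apply ℝ ℝ w).comp B2).comp (ContinuousLinearMap.inr ℝ ℝ _))
      (X t) := by
    intro w
    have := (ev2 Qf (t, X t) (hQ'd t ht (X t)) w).comp (X t)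
      (hasFDerivAt_prodMk_right t (X t))
    simpa [ContinuousLinearMap.comp_assoc, Function.comp_def] using this
  have hmc : ∀ c : ℝ, HasFDerivAt (fun y => Pf (t, y) ^ c)
      ((c * r ^ (c-1)) • (A.comp (ContinuousLinearMap.inr ℝ ℝ _))) (X t) := fun c =>
    hm.rpow_const (Or.inl hr.ne')
  have keyF : ∀ (c : ℝ) (w : ℝ × EuclideanSpace ℝ (Fin n)),
      HasFDerivAt (fun y => Pf (t, y) ^ c * fderiv ℝ Qf (t, y) w)
        ((r ^ c) • (((ContinuousLinearMap.apply ℝ ℝ w).comp B2).comp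
            (ContinuousLinearMap.inr ℝ ℝ _))
          + (fderiv ℝ Qf (t, X t) w) •
              ((c * r ^ (c-1)) • (A.comp (ContinuousLinearMap.inr ℝ ℝ _)))) (X t) := by
    intro c w
    exact (hmc c).mul (hq w)
  have keyApp : ∀ (c : ℝ) (w : ℝ × EuclideanSpace ℝ (Fin n)) (i : Fin n),
      fderiv ℝ (fun y => Pf (t, y) ^ c * fderiv ℝ Qf (t, y) w) (X t)
          (EuclideanSpace.single i 1)
        = r ^ c * B2 (ee i) w + B w * (c * r ^ (c-1) * rr i) := by
    intro c w i
    rw [(keyF c w).fderiv]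
    simp [hee, hrr, hB, mul_assoc]
  -- second derivative of X, componentwise
  have h2nd : ∀ i, deriv (deriv X) t i
      = r ^ (γ-1) * B2 (1, v t (X t)) (ee i)
        + g i * ((γ-1) * r ^ (γ-1-1) * A (1, v t (X t))) := by
    intro i
    have hP1 : HasDerivAt (fun s => Pf (s, X s)) (A (1, v t (X t))) t := by
      simpa [Function.comp_def] using (hPd t ht (X t)).hasFDerivAt.comp_hasDerivAt t hcurve
    have hpow : HasDerivAt (fun s => Pf (s, X s) ^ (γ-1))
        (A (1, v t (X t)) * (γ-1) * r ^ (γ-1-1)) t := by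
      have := hP1.rpow_const (p := γ-1) (Or.inl hr.ne')
      simpa using this
    have hQ1 : HasDerivAt (fun s => fderiv ℝ Qf (s, X s) (ee i))
        (B2 (1, v t (X t)) (ee i)) t := by
      have := (ev2 Qf (t, X t) (hQ'd t ht (X t)) (ee i)).comp_hasDerivAt t hcurve
      simpa [Function.comp_def] using this
    have hprod : HasDerivAt (fun s => Pf (s, X s) ^ (γ-1) * fderiv ℝ Qf (s, X s) (ee i))
        (A (1, v t (X t)) * (γ-1) * r ^ (γ-1-1) * fderiv ℝ Qf (t, X t) (ee i)
          + Pf (t, X t) ^ (γ-1) * B2 (1, v t (X t)) (ee i)) t := hpow.mul hQ1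
    have heqv : (fun s => v s (X s) i)
        =ᶠ[𝓝 t] (fun s => Pf (s, X s) ^ (γ-1) * fderiv ℝ Qf (s, X s) (ee i)) := by
      filter_upwards [hIopen.mem_nhds ht] with s hs
      exact hvc s hs (X s) i
    have hder2 : HasDerivAt (fun s => v s (X s) i)
        (A (1, v t (X t)) * (γ-1) * r ^ (γ-1-1) * fderiv ℝ Qf (t, X t) (ee i)
          + Pf (t, X t) ^ (γ-1) * B2 (1, v t (X t)) (ee i)) t :=
      hprod.congr_of_eventuallyEq heqv
    have hproj : HasDerivAt (fun s => deriv X s i) (deriv (deriv X) t i) t := by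
      have h0 : HasDerivAt (deriv X) (deriv (deriv X) t) t := (hX' t ht).hasDerivAt
      simpa [Function.comp_def] using
        (EuclideanSpace.proj (𝕜 := ℝ) i).hasFDerivAt.comp_hasDerivAt t h0
    have heq2 : (fun s => v s (X s) i) =ᶠ[𝓝 t] (fun s => deriv X s i) := by
      filter_upwards [hIopen.mem_nhds ht] with s hs
      rw [(hX s hs).deriv]
    have hder2' : HasDerivAt (fun s => v s (X s) i) (deriv (deriv X) t i) t :=
      hproj.congr_of_eventuallyEq heq2
    have := hder2'.unique hder2
    rw [this]
    have hPv : Pf (t, X t) = r := rfl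
    have hBv : fderiv ℝ Qf (t, X t) (ee i) = g i := rfl
    rw [hPv, hBv]; ring
  -- differentiated Hamilton–Jacobi equation
  have hHJfun : (fun y => fderiv ℝ Qf (t, y) eT)
      = (fun y => -(γ/2) * (Pf (t, y) ^ (γ-1)
          * ∑ j, fderiv ℝ Qf (t, y) (ee j) * fderiv ℝ Qf (t, y) (ee j))) := by
    funext y
    have h0 := hHJ t ht y
    have h1 : deriv (fun s => Φ s y) t = fderiv ℝ Qf (t, y) eT := by
      have := (slice_t Qf (t, y) (hQd t ht y)).deriv
      simpa [heT] using this
    have h2 : ‖gradient (Φ t) y‖^2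
        = ∑ j, fderiv ℝ Qf (t, y) (ee j) * fderiv ℝ Qf (t, y) (ee j) := by
      rw [norm_sq_eq']
      exact Finset.sum_congr rfl fun j _ => by rw [hgradΦ t ht y j]
    rw [h1, h2] at h0
    have hPy : Pf (t, y) = ρ t y := rfl
    rw [hPy]
    linarith
  have hHJd : ∀ i, B2 (ee i) eT
      = -(γ/2) * ((γ-1) * r ^ (γ-1-1) * rr i * S + r ^ (γ-1) * (2 * TT i)) := by
    intro i
    have hN := HasFDerivAt.fun_sum (u := Finset.univ)
      (fun j (_ : j ∈ Finset.univ) => (hq (ee j)).fun_mul (hq (ee j)))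
    have hprod2 := (hmc (γ-1)).fun_mul hN
    have hrhs := hprod2.const_mul (-(γ/2))
    have hfdeq : fderiv ℝ (fun y => fderiv ℝ Qf (t, y) eT) (X t)
        = fderiv ℝ (fun y => -(γ/2) * (Pf (t, y) ^ (γ-1)
            * ∑ j, fderiv ℝ Qf (t, y) (ee j) * fderiv ℝ Qf (t, y) (ee j))) (X t) := by
      rw [hHJfun]
    rw [(hq eT).fderiv, hrhs.fderiv] at hfdeq
    have happ := congrArg (fun (L : EuclideanSpace ℝ (Fin n) →L[ℝ] ℝ) =>
      L (EuclideanSpace.single i 1)) hfdeq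
    simp only [ContinuousLinearMap.comp_apply, ContinuousLinearMap.add_apply,
      ContinuousLinearMap.smul_apply, ContinuousLinearMap.coe_smul', Pi.smul_apply,
      ContinuousLinearMap.inr_apply, ContinuousLinearMap.apply_apply,
      ContinuousLinearMap.coe_sum', Finset.sum_apply, smul_eq_mul] at happ
    have hPv : Pf (t, X t) = r := rfl
    rw [hPv] at happ
    have hBee : ∀ j, fderiv ℝ Qf (t, X t) (ee j) = g j := fun j => rfl
    have hB2ee : ∀ j, B2 ((0:ℝ), EuclideanSpace.single i 1) (ee j) = H i j := fun j => rfl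
    have hB2eT : B2 ((0:ℝ), EuclideanSpace.single i 1) eT = B2 (ee i) eT := rfl
    have hAee : A ((0:ℝ), EuclideanSpace.single i 1) = rr i := rfl
    simp only [hBee, hB2ee, hB2eT, hAee] at happ
    rw [happ]
    have e1 : ∑ x, (g x * H i x + g x * H i x) = 2 * TT i := by
      have h' : TT i = ∑ j, g j * H i j := rfl
      rw [h', Finset.sum_add_distrib]; ring
    have e2 : ∑ x, g x * g x = S := rfl
    rw [e1, e2]; ring
  -- continuity equation at (t, X t)
  have hAt : A eT = -(γ * r ^ (γ-1) * uu + r ^ γ * K) := by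
    have h0 := hcont t ht (X t)
    have h1 : deriv (fun s => ρ s (X t)) t = A eT := by
      have := (slice_t Pf (t, X t) (hPd t ht (X t))).deriv
      simpa [heT] using this
    have h2 : divg n (fun y => (ρ t y)^γ • gradient (Φ t) y) (X t)
        = γ * r ^ (γ-1) * uu + r ^ γ * K := by
      have hfun : ∀ j : Fin n, (fun y => ((ρ t y)^γ • gradient (Φ t) y) j)
          = fun y => Pf (t, y) ^ γ * fderiv ℝ Qf (t, y) (ee j) := by
        intro j; funext y
        rw [PiLp.smul_apply, smul_eq_mul, hgradΦ t ht y j]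
      calc divg n (fun y => (ρ t y)^γ • gradient (Φ t) y) (X t)
          = ∑ j, fderiv ℝ (fun y => Pf (t, y) ^ γ * fderiv ℝ Qf (t, y) (ee j)) (X t)
              (EuclideanSpace.single j 1) := by
            simp only [divg, pder]
            exact Finset.sum_congr rfl fun j _ => by rw [hfun j]
        _ = ∑ j, (r ^ γ * H j j + g j * (γ * r ^ (γ-1) * rr j)) := by
            refine Finset.sum_congr rfl fun j _ => ?_
            rw [keyApp γ (ee j) j]
        _ = γ * r ^ (γ-1) * uu + r ^ γ * K := by
            rw [Finset.sum_add_distrib]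
            have e1 : ∑ j, r ^ γ * H j j = r ^ γ * K := by
              rw [hK, Finset.mul_sum]
            have e2 : ∑ j, g j * (γ * r ^ (γ-1) * rr j) = γ * r ^ (γ-1) * uu := by
              rw [huu, Finset.mul_sum]
              exact Finset.sum_congr rfl fun j _ => by ring
            rw [e1, e2]; ring
    rw [h1, h2] at h0
    linarith
  -- gradient of ‖v t ·‖² at X t
  have hgradv : ∀ i, gradient (fun y => ‖v t y‖^2) (X t) i
      = 2 * (r ^ (γ-1) * r ^ (γ-1)) * TT i
        + 2 * (γ-1) * (r ^ (γ-1) * r ^ (γ-1-1)) * rr i * S := by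
    intro i
    have hfun : (fun y => ‖v t y‖^2) = (fun y => ∑ j,
        (Pf (t, y) ^ (γ-1) * fderiv ℝ Qf (t, y) (ee j))
          * (Pf (t, y) ^ (γ-1) * fderiv ℝ Qf (t, y) (ee j))) := by
      funext y
      rw [norm_sq_eq']
      exact Finset.sum_congr rfl fun j _ => by rw [hvc t ht y j]
    have hsum := HasFDerivAt.fun_sum (u := Finset.univ)
      (fun j (_ : j ∈ Finset.univ) => (keyF (γ-1) (ee j)).fun_mul (keyF (γ-1) (ee j)))
    rw [grad_comp', hfun, hsum.fderiv]
    simp only [ContinuousLinearMap.comp_apply, ContinuousLinearMap.add_apply,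
      ContinuousLinearMap.smul_apply, ContinuousLinearMap.coe_smul', Pi.smul_apply,
      ContinuousLinearMap.inr_apply, ContinuousLinearMap.apply_apply,
      ContinuousLinearMap.coe_sum', Finset.sum_apply, smul_eq_mul]
    have hPv : Pf (t, X t) = r := rfl
    have hBee : ∀ j, fderiv ℝ Qf (t, X t) (ee j) = g j := fun j => rfl
    have hB2ee : ∀ j, B2 ((0:ℝ), EuclideanSpace.single i 1) (ee j) = H i j := fun j => rfl
    have hAee : A ((0:ℝ), EuclideanSpace.single i 1) = rr i := rfl
    simp only [hPv, hBee, hB2ee, hAee]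
    have hcongr : ∀ j : Fin n,
        r ^ (γ-1) * g j * (r ^ (γ-1) * H i j + g j * ((γ-1) * r ^ (γ-1-1) * rr i))
          + r ^ (γ-1) * g j * (r ^ (γ-1) * H i j + g j * ((γ-1) * r ^ (γ-1-1) * rr i))
        = 2 * (r ^ (γ-1) * r ^ (γ-1)) * (g j * H i j)
          + 2 * (γ-1) * (r ^ (γ-1) * r ^ (γ-1-1)) * rr i * (g j * g j) := fun j => by ring
    calc (∑ j, (r ^ (γ-1) * g j * (r ^ (γ-1) * H i j + g j * ((γ-1) * r ^ (γ-1-1) * rr i))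
          + r ^ (γ-1) * g j * (r ^ (γ-1) * H i j + g j * ((γ-1) * r ^ (γ-1-1) * rr i))))
        = ∑ j, (2 * (r ^ (γ-1) * r ^ (γ-1)) * (g j * H i j)
          + 2 * (γ-1) * (r ^ (γ-1) * r ^ (γ-1-1)) * rr i * (g j * g j)) :=
          Finset.sum_congr rfl fun j _ => hcongr j
      _ = 2 * (r ^ (γ-1) * r ^ (γ-1)) * TT i
          + 2 * (γ-1) * (r ^ (γ-1) * r ^ (γ-1-1)) * rr i * S := by
          rw [Finset.sum_add_distrib, hTT, hS, Finset.mul_sum, Finset.mul_sum]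
  -- divergence of v t at X t
  have hdivv : divg n (v t) (X t) = (γ-1) * r ^ (γ-1-1) * uu + r ^ (γ-1) * K := by
    have hfun : ∀ j : Fin n, (fun y => v t y j)
        = fun y => Pf (t, y) ^ (γ-1) * fderiv ℝ Qf (t, y) (ee j) := by
      intro j; funext y; rw [hvc t ht y j]
    calc divg n (v t) (X t)
        = ∑ j, fderiv ℝ (fun y => Pf (t, y) ^ (γ-1) * fderiv ℝ Qf (t, y) (ee j)) (X t)
            (EuclideanSpace.single j 1) := by
          simp only [divg, pder]
          exact Finset.sum_congr rfl fun j _ => by rw [hfun j]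
      _ = ∑ j, (r ^ (γ-1) * H j j + g j * ((γ-1) * r ^ (γ-1-1) * rr j)) := by
          refine Finset.sum_congr rfl fun j _ => ?_
          rw [keyApp (γ-1) (ee j) j]
      _ = (γ-1) * r ^ (γ-1-1) * uu + r ^ (γ-1) * K := by
          rw [Finset.sum_add_distrib]
          have e1 : ∑ j, r ^ (γ-1) * H j j = r ^ (γ-1) * K := by
            rw [hK, Finset.mul_sum]
          have e2 : ∑ j, g j * ((γ-1) * r ^ (γ-1-1) * rr j)
              = (γ-1) * r ^ (γ-1-1) * uu := by
            rw [huu, Finset.mul_sum]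
            exact Finset.sum_congr rfl fun j _ => by ring
          rw [e1, e2]; ring
  -- gradient of log density
  have hgradlog : ∀ i, gradient (fun y => Real.log (ρ t y)) (X t) i = r⁻¹ * rr i := by
    intro i
    have hlog := hm.log (show Pf (t, X t) ≠ 0 from hr.ne')
    have hfun : (fun y => Real.log (ρ t y)) = (fun y => Real.log (Pf (t, y))) := rfl
    rw [grad_comp', hfun, hlog.fderiv]
    simp only [ContinuousLinearMap.comp_apply, ContinuousLinearMap.smul_apply,
      ContinuousLinearMap.coe_smul', Pi.smul_apply, ContinuousLinearMap.inr_apply,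
      smul_eq_mul]
    rfl
  -- squared speed
  have hnormX : ‖deriv X t‖^2 = r ^ (γ-1) * r ^ (γ-1) * S := by
    rw [hderivX, norm_sq_eq']
    calc (∑ j, v t (X t) j * v t (X t) j)
        = ∑ j, (r ^ (γ-1) * g j) * (r ^ (γ-1) * g j) :=
          Finset.sum_congr rfl fun j _ => by rw [hξi j]
      _ = r ^ (γ-1) * r ^ (γ-1) * S := by
          rw [hS, Finset.mul_sum]
          exact Finset.sum_congr rfl fun j _ => by ring
-- decomposition of the space-time velocity direction
  have hdec : ((1:ℝ), v t (X t)) = eT + ∑ j, (r ^ (γ-1) * g j) • ee j := by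
    have hsum2 : ∑ j, (r ^ (γ-1) * g j) • ee j = ((0:ℝ), v t (X t)) := by
      refine Prod.ext ?_ ?_
      · rw [Prod.fst_sum]; simp [hee]
      · rw [Prod.snd_sum]
        have hterm : ∀ j ∈ Finset.univ, ((r ^ (γ-1) * g j) • ee j).2
            = (v t (X t) j) • EuclideanSpace.single j (1:ℝ) := by
          intro j _
          rw [hξi j]; simp [hee]
        rw [Finset.sum_congr rfl hterm]
        exact esum_single (v t (X t))
    rw [hsum2, heT]
    refine Prod.ext (by norm_num) (by simp)
  have hA1 : A (1, v t (X t)) = A eT + r ^ (γ-1) * uu := by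
    rw [hdec, map_add, _root_.map_sum]
    congr 1
    have hAee' : ∀ j : Fin n, A ((r ^ (γ-1) * g j) • ee j) = (r ^ (γ-1) * g j) * rr j :=
      fun j => by rw [_root_.map_smul, smul_eq_mul]
    rw [Finset.sum_congr rfl fun j _ => hAee' j, huu, Finset.mul_sum]
    exact Finset.sum_congr rfl fun j _ => by ring
  have hB21 : ∀ i, B2 (1, v t (X t)) (ee i) = B2 (ee i) eT + r ^ (γ-1) * TT i := by
    intro i
    rw [hdec, map_add, _root_.map_sum]
    simp only [_root_.map_smul, ContinuousLinearMap.add_apply, ContinuousLinearMap.coe_sum',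
      Finset.sum_apply, ContinuousLinearMap.coe_smul', Pi.smul_apply, smul_eq_mul]
    rw [hsym eT (ee i)]
    congr 1
    rw [hTT, Finset.mul_sum]
    refine Finset.sum_congr rfl fun j _ => ?_
    rw [hsym (ee j) (ee i)]
    show r ^ (γ-1) * g j * H i j = r ^ (γ-1) * (g j * H i j)
    ring
  -- final assembly, componentwise
  ext i
  show deriv (deriv X) t i
      + (((γ-1)/2) • gradient (fun y => ‖v t y‖^2) (X t)) i
      + (((γ-1) * divg n (v t) (X t)) • deriv X t) i
      - ((((γ-2)*(γ-1)/2) * ‖deriv X t‖^2) • gradient (fun y => Real.log (ρ t y)) (X t)) i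
      = 0
  rw [PiLp.smul_apply, PiLp.smul_apply, PiLp.smul_apply, smul_eq_mul, smul_eq_mul,
    smul_eq_mul]
  have hvti : deriv X t i = r ^ (γ-1) * g i := by rw [hderivX]; exact hξi i
  rw [h2nd i, hgradv i, hgradlog i, hnormX, hdivv, hvti, hB21 i, hA1, hAt, hHJd i]
  have R1 : r ^ (γ-1) = r ^ (γ-1-1) * r := by
    have h := Real.rpow_add hr (γ-1-1) 1
    rw [Real.rpow_one, show γ-1-1+1 = γ-1 by ring] at h
    exact h
  have R2 : r ^ γ = r ^ (γ-1-1) * r * r := by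
    have h := Real.rpow_add hr (γ-1) 1
    rw [Real.rpow_one, show γ-1+1 = γ by ring, R1] at h
    exact h
  rw [R2, R1]
  field_simp
  ring
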